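/- Let g₁, g₂ ∈ ℝ³ be unit vectors that are not parallel, let h₁, h₂ ∈ ℝ³ be arbitrary vectors, and let s ∈ ℝ. Then the 12×6 block matrix Q = [[P_{g₁}, s P_{g₁}], [−h₁g₁ᵀ, P_{g₁} − s h₁g₁ᵀ], [P_{g₂}, s P_{g₂}], [−h₂g₂ᵀ, P_{g₂} − s h₂g₂ᵀ]], where P_{gⱼ} = I₃ − gⱼgⱼᵀ, has rank 6 (full column rank). -/

import Mathlib

open Matrix

/-- The orthogonal projection matrix `P_g = I₃ − g gᵀ` associated with `g ∈ ℝ³`. -/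
noncomputable def projMat (g : Fin 3 → ℝ) : Matrix (Fin 3) (Fin 3) ℝ :=
  (1 : Matrix (Fin 3) (Fin 3) ℝ) - vecMulVec g g

/-- The `12 × 6` two-observer observability matrix
`Q = [[P_{g₁}, s P_{g₁}], [−h₁g₁ᵀ, P_{g₁} − s h₁g₁ᵀ],
      [P_{g₂}, s P_{g₂}], [−h₂g₂ᵀ, P_{g₂} − s h₂g₂ᵀ]]`.
Rows are indexed by `Fin 2 × (Fin 3 ⊕ Fin 3)` (observer, then bearing/rate block row),
columns by `Fin 3 ⊕ Fin 3` (position block, velocity block). -/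
noncomputable def obsMat2 (s : ℝ) (g h : Fin 2 → Fin 3 → ℝ) :
    Matrix (Fin 2 × (Fin 3 ⊕ Fin 3)) (Fin 3 ⊕ Fin 3) ℝ :=
  fun p c =>
    match p.2, c with
    | Sum.inl r, Sum.inl c => projMat (g p.1) r c
    | Sum.inl r, Sum.inr c => s * projMat (g p.1) r c
    | Sum.inr r, Sum.inl c => -(h p.1 r * g p.1 c)
    | Sum.inr r, Sum.inr c => projMat (g p.1) r c - s * (h p.1 r * g p.1 c)

lemma vmv_mulVec (u v w : Fin 3 → ℝ) :
    (vecMulVec u v).mulVec w = (v ⬝ᵥ w) • u := by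
  funext r
  simp [mulVec, vecMulVec, dotProduct, smul_eq_mul, Finset.mul_sum, mul_comm, mul_left_comm]

lemma proj_mulVec (g w : Fin 3 → ℝ) :
    (projMat g).mulVec w = w - (g ⬝ᵥ w) • g := by
  unfold projMat
  rw [Matrix.sub_mulVec, Matrix.one_mulVec, vmv_mulVec]

lemma indep_aux (g₁ g₂ : Fin 3 → ℝ) (h1 : g₁ ⬝ᵥ g₁ = 1) (h2 : g₂ ⬝ᵥ g₂ = 1)
    (hne : g₁ ≠ g₂) (hne' : g₁ ≠ -g₂) (w : Fin 3 → ℝ) (a b : ℝ)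
    (ha : w = a • g₁) (hb : w = b • g₂) : w = 0 := by
  by_cases h : a = 0
  · simp [ha, h]
  · exfalso
    have hg : g₁ = (b / a) • g₂ := by
      have he : a • g₁ = b • g₂ := ha ▸ hb
      rw [div_eq_inv_mul, mul_smul, ← he, inv_smul_smul₀ h]
    have hsq : (b / a) ^ 2 = 1 := by
      have h1' := h1
      rw [hg, smul_dotProduct, dotProduct_smul, h2, smul_eq_mul, smul_eq_mul] at h1'
      nlinarith [h1']
    have hor : b / a = 1 ∨ b / a = -1 := by
      have : (b / a - 1) * (b / a + 1) = 0 := by nlinarith [hsq]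
      rcases mul_eq_zero.mp this with h' | h'
      · left; linarith
      · right; linarith
    rcases hor with h' | h'
    · exact hne (by rw [hg, h', one_smul])
    · exact hne' (by rw [hg, h', neg_one_smul])

lemma proj_kernel (g w : Fin 3 → ℝ) (hw : (projMat g).mulVec w = 0) :
    w = (g ⬝ᵥ w) • g := by
  have := proj_mulVec g w
  rw [hw] at this
  linear_combination (norm := abel) -this

/-- If `g₁, g₂ ∈ ℝ³` are non-parallel unit vectors, `h₁, h₂ ∈ ℝ³` are arbitrary,
and `s ∈ ℝ`, then the `12 × 6` two-observer observability matrix `Q` has full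
column rank `6`. -/
theorem obsMat2_rank_eq_six (s : ℝ) (g h : Fin 2 → Fin 3 → ℝ)
    (hg : ∀ j, g j ⬝ᵥ g j = 1)
    (hne : g 0 ≠ g 1) (hne' : g 0 ≠ -(g 1)) :
    (obsMat2 s g h).rank = 6 := by
  have hinj : Function.Injective (obsMat2 s g h).mulVecLin := by
    rw [← LinearMap.ker_eq_bot, LinearMap.ker_eq_bot']
    intro u hu
    simp only [mulVecLin_apply] at hu
    set x : Fin 3 → ℝ := fun c => u (Sum.inl c) with hx
    set y : Fin 3 → ℝ := fun c => u (Sum.inr c) with hy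
    have h1 : ∀ j, (projMat (g j)).mulVec (x + s • y) = 0 := by
      intro j
      funext r
      have e := congrFun hu (j, Sum.inl r)
      simp only [obsMat2, mulVec, dotProduct, Fintype.sum_sum_type, Pi.zero_apply] at e ⊢
      simp only [Pi.add_apply, Pi.smul_apply, smul_eq_mul, mul_add, Finset.sum_add_distrib]
      rw [← e]; ring_nf
      congr 1 <;> exact Finset.sum_congr rfl (fun c _ => by ring)
    have hz : x + s • y = 0 :=
      indep_aux (g 0) (g 1) (hg 0) (hg 1) hne hne' _ _ _
        (proj_kernel _ _ (h1 0)) (proj_kernel _ _ (h1 1))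
    have hdz : ∀ j, g j ⬝ᵥ x + s * (g j ⬝ᵥ y) = 0 := by
      intro j
      have : g j ⬝ᵥ (x + s • y) = 0 := by rw [hz]; simp
      simpa [dotProduct_add, dotProduct_smul, smul_eq_mul] using this
    have h2 : ∀ j, (projMat (g j)).mulVec y = 0 := by
      intro j
      funext r
      have e := congrFun hu (j, Sum.inr r)
      simp only [obsMat2, mulVec, dotProduct, Fintype.sum_sum_type, Pi.zero_apply] at e
      have e2 : -(h j r) * (g j ⬝ᵥ x) + ((projMat (g j)).mulVec y r
          - s * (h j r) * (g j ⬝ᵥ y)) = 0 := by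
        rw [← e]
        simp only [mulVec, dotProduct, neg_mul, Finset.mul_sum, sub_mul,
          Finset.sum_sub_distrib]
        ring_nf
        rfl
      have hd := hdz j
      simp only [Pi.zero_apply]
      linear_combination e2 + h j r * hd
    have hyz : y = 0 :=
      indep_aux (g 0) (g 1) (hg 0) (hg 1) hne hne' _ _ _
        (proj_kernel _ _ (h2 0)) (proj_kernel _ _ (h2 1))
    have hxz : x = 0 := by
      have := hz
      rw [hyz] at this
      simpa using this
    funext c
    cases c with
    | inl c => exact congrFun hxz c
    | inr c => exact congrFun hyz c
  have : (obsMat2 s g h).rank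
      = Module.finrank ℝ ((Fin 3 ⊕ Fin 3) → ℝ) := by
    rw [Matrix.rank, LinearMap.finrank_range_of_inj hinj]
  rw [this]
  simp
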